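/- Let λ ∈ (0,1], and for each m ≥ 0 let D_a(m) denote the thresholds of Theorem 1. For a fixed state (a,d) with a ≥ 1 and d ≥ 0, the Whittle index m(a,d) of Theorem 3 is the unique m ≥ 0 such that d = D_a(m) when d ≤ (λ/2)a² + (1−λ/2)a corresponds to the branch a ≥ β(m) (giving d = λm, i.e., m = d/λ), and when d > (λ/2)a² + (1−λ/2)a corresponds to the branch a < β(m) (giving d = (1−λ+aλ)β(m) − λa(a−1)/2, i.e., β(m) = x := (d + λa(a−1)/2)/(1−λ+aλ) and m = (1/2)x² + (1/λ−1/2)x). -/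

import Mathlib

/-- The base threshold `β(m)`: nonnegative root of `(1/2)β² + (1/λ−1/2)β − m = 0`. -/
noncomputable def betaRoot (lam m : ℝ) : ℝ :=
  -(1/lam - 1/2) + Real.sqrt ((1/lam - 1/2)^2 + 2*m)

/-- The thresholds `D_a(m)` of Theorem 1. -/
noncomputable def thresholdD (lam m : ℝ) (a : ℕ) : ℝ :=
  if (a : ℝ) < betaRoot lam m then
    (1 - lam + (a:ℝ)*lam) * betaRoot lam m - lam * ((a:ℝ)-1)*(a:ℝ)/2
  else lam * m

/-- The Whittle index of Theorem 3. -/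
noncomputable def whittleIndex (lam : ℝ) (a d : ℕ) : ℝ :=
  if (d : ℝ) > (lam/2) * (a:ℝ)^2 + (1 - lam/2) * (a:ℝ) then
    (1/2) * (((d:ℝ) + lam * (a:ℝ) * ((a:ℝ)-1)/2)/(1 - lam + (a:ℝ)*lam))^2
      + (1/lam - 1/2) * (((d:ℝ) + lam * (a:ℝ) * ((a:ℝ)-1)/2)/(1 - lam + (a:ℝ)*lam))
  else (d:ℝ)/lam

lemma betaRoot_nonneg (lam m : ℝ) (hc : 0 ≤ 1/lam - 1/2) (hm : 0 ≤ m) :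
    0 ≤ betaRoot lam m := by
  unfold betaRoot
  have h1 : (1/lam - 1/2) ≤ Real.sqrt ((1/lam-1/2)^2 + 2*m) := by
    have h2 := Real.sqrt_le_sqrt (show (1/lam-1/2)^2 ≤ (1/lam-1/2)^2 + 2*m by linarith)
    rwa [Real.sqrt_sq hc] at h2
  linarith

lemma betaRoot_eq (lam m : ℝ) (hm : 0 ≤ (1/lam-1/2)^2 + 2*m) :
    (1/2) * (betaRoot lam m)^2 + (1/lam-1/2) * (betaRoot lam m) = m := by
  unfold betaRoot
  have hs : (Real.sqrt ((1/lam-1/2)^2 + 2*m))^2 = (1/lam-1/2)^2 + 2*m :=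
    Real.sq_sqrt hm
  nlinarith [hs]

lemma betaRoot_inv (lam x : ℝ) (hx : 0 ≤ x) (hc : 0 ≤ 1/lam - 1/2) :
    betaRoot lam ((1/2)*x^2 + (1/lam-1/2)*x) = x := by
  unfold betaRoot
  have h : (1/lam-1/2)^2 + 2*((1/2)*x^2 + (1/lam-1/2)*x) = (x + (1/lam-1/2))^2 := by ring
  rw [h, Real.sqrt_sq (by linarith)]
  ring

lemma quad_mono (c b y : ℝ) (hc : 0 ≤ c) (hb0 : 0 ≤ b) (hby : b ≤ y) :
    (1/2)*b^2 + c*b ≤ (1/2)*y^2 + c*y := by nlinarith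

set_option maxHeartbeats 1600000 in
theorem stmt15 (lam : ℝ) (hlam0 : 0 < lam) (hlam1 : lam ≤ 1)
    (a d : ℕ) (ha : 1 ≤ a) :
    0 ≤ whittleIndex lam a d ∧
    (d : ℝ) = thresholdD lam (whittleIndex lam a d) a ∧
    (∀ m : ℝ, 0 ≤ m → (d : ℝ) = thresholdD lam m a → m = whittleIndex lam a d) ∧
    ((d : ℝ) ≤ (lam/2) * (a:ℝ)^2 + (1 - lam/2) * (a:ℝ) →
      (a : ℝ) ≥ betaRoot lam (whittleIndex lam a d) ∧ whittleIndex lam a d = (d:ℝ)/lam) ∧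
    ((d : ℝ) > (lam/2) * (a:ℝ)^2 + (1 - lam/2) * (a:ℝ) →
      (a : ℝ) < betaRoot lam (whittleIndex lam a d) ∧
      betaRoot lam (whittleIndex lam a d)
        = ((d:ℝ) + lam * (a:ℝ) * ((a:ℝ)-1)/2)/(1 - lam + (a:ℝ)*lam)) := by
  have h1lam : 1 ≤ 1/lam := by
    rw [le_div_iff₀ hlam0]; linarith
  have hc : 0 ≤ 1/lam - 1/2 := by linarith
  have hca : (1:ℝ) ≤ (a:ℝ) := by exact_mod_cast ha
  have hq : (1:ℝ) ≤ 1 - lam + (a:ℝ)*lam := by nlinarith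
  have hq0 : (0:ℝ) < 1 - lam + (a:ℝ)*lam := by linarith
  have hd0 : (0:ℝ) ≤ (d:ℝ) := Nat.cast_nonneg d
  have hE1 : (a:ℝ) ≤ (lam/2) * (a:ℝ)^2 + (1 - lam/2) * (a:ℝ) := by nlinarith
  have hlamE : lam * ((1/2)*(a:ℝ)^2 + (1/lam-1/2)*(a:ℝ))
      = (lam/2) * (a:ℝ)^2 + (1 - lam/2) * (a:ℝ) := by
    field_simp
  by_cases h : (d : ℝ) > (lam/2) * (a:ℝ)^2 + (1 - lam/2) * (a:ℝ)
  · -- upper branch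
    set x : ℝ := ((d:ℝ) + lam * (a:ℝ) * ((a:ℝ)-1)/2)/(1 - lam + (a:ℝ)*lam) with hxdef
    have hnum : (0:ℝ) < (d:ℝ) + lam * (a:ℝ) * ((a:ℝ)-1)/2 := by nlinarith
    have hx0 : 0 < x := div_pos hnum hq0
    have hW : whittleIndex lam a d = (1/2)*x^2 + (1/lam-1/2)*x := by
      rw [whittleIndex, if_pos h]
    have hbW : betaRoot lam (whittleIndex lam a d) = x := by
      rw [hW]; exact betaRoot_inv lam x hx0.le hc
    have hax : (a:ℝ) < x := by
      rw [hxdef, lt_div_iff₀ hq0]; nlinarith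
    have hW0 : 0 ≤ whittleIndex lam a d := by
      rw [hW]; nlinarith
    have hqx : (1 - lam + (a:ℝ)*lam) * x = (d:ℝ) + lam * (a:ℝ) * ((a:ℝ)-1)/2 := by
      rw [hxdef, mul_div_assoc', mul_div_right_comm, div_self hq0.ne', one_mul]
    have hdT : (d : ℝ) = thresholdD lam (whittleIndex lam a d) a := by
      rw [thresholdD, if_pos (by rw [hbW]; exact hax), hbW]
      linarith [hqx]
    refine ⟨hW0, hdT, ?_, fun hle => absurd h (not_lt.mpr hle), fun _ => ⟨by rw [hbW]; exact hax, by rw [hbW]⟩⟩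
    intro m hm hdm
    rw [thresholdD] at hdm
    by_cases hb : (a:ℝ) < betaRoot lam m
    · rw [if_pos hb] at hdm
      have hbeq : betaRoot lam m = x := by
        rw [hxdef]; rw [eq_div_iff (ne_of_gt hq0)]; linarith
      have := betaRoot_eq lam m (by positivity)
      rw [hbeq] at this
      rw [hW]; linarith
    · rw [if_neg hb] at hdm
      push_neg at hb
      have hb0 : 0 ≤ betaRoot lam m := betaRoot_nonneg lam m hc hm
      have heq := betaRoot_eq lam m (by positivity)
      set b := betaRoot lam m with hbdef
      have hmle : m ≤ (1/2)*(a:ℝ)^2 + (1/lam-1/2)*(a:ℝ) := by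
        have := quad_mono (1/lam-1/2) b (a:ℝ) hc hb0 hb
        linarith
      have : (d:ℝ) ≤ (lam/2) * (a:ℝ)^2 + (1 - lam/2) * (a:ℝ) := by
        rw [hdm, ← hlamE]
        exact mul_le_mul_of_nonneg_left hmle hlam0.le
      linarith
  · -- lower branch
    push_neg at h
    have hW : whittleIndex lam a d = (d:ℝ)/lam := by
      rw [whittleIndex, if_neg (by push_neg; exact h)]
    have hW0 : 0 ≤ whittleIndex lam a d := by
      rw [hW]; positivity
    have hlamW : lam * whittleIndex lam a d = (d:ℝ) := by
      rw [hW]; field_simp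
    have hb0 : 0 ≤ betaRoot lam (whittleIndex lam a d) := betaRoot_nonneg lam _ hc hW0
    have heq := betaRoot_eq lam (whittleIndex lam a d) (by positivity)
    have hble : betaRoot lam (whittleIndex lam a d) ≤ (a:ℝ) := by
      by_contra hgt
      push_neg at hgt
      have hWgt : (1/2)*(a:ℝ)^2 + (1/lam-1/2)*(a:ℝ) < whittleIndex lam a d := by nlinarith
      have : (lam/2) * (a:ℝ)^2 + (1 - lam/2) * (a:ℝ) < (d:ℝ) := by
        rw [← hlamW, ← hlamE]; nlinarith
      linarith
    have hdT : (d : ℝ) = thresholdD lam (whittleIndex lam a d) a := by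
      rw [thresholdD, if_neg (not_lt.mpr hble), hlamW]
    refine ⟨hW0, hdT, ?_, fun _ => ⟨hble, hW⟩, fun hgt => absurd hgt (not_lt.mpr h)⟩
    intro m hm hdm
    rw [thresholdD] at hdm
    by_cases hb : (a:ℝ) < betaRoot lam m
    · rw [if_pos hb] at hdm
      have : (lam/2) * (a:ℝ)^2 + (1 - lam/2) * (a:ℝ) < (d:ℝ) := by
        rw [hdm]; nlinarith
      linarith
    · rw [if_neg hb] at hdm
      rw [hW, hdm]; field_simp
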